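/- Let D(θ) = P(x ≤ θ | g=0) − P(x ≤ θ | g=1) denote the positive-rate gap of a threshold classifier. Assuming differentiability, D'(θ) = h_x(θ)·(P(g=1) − P(g=1 | x=θ))/(P(g=1)·P(g=0)). -/

import Mathlib

/-- Derivative of the positive-rate gap `D(θ) = P(x ≤ θ | g=0) − P(x ≤ θ | g=1)`.
`J1 θ = P(g=1, x ≤ θ)` and `J0 θ = P(g=0, x ≤ θ)` are joint CDFs with
derivatives `P(g=j | x=θ)·h_x(θ)` at `θ`, where `φ θ = P(g=1 | x=θ)` and
`p = P(g=1) ∈ (0,1)`.  Then `D'(θ) = h_x(θ)·(p − φ(θ))/(p·(1−p))`. -/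
theorem positive_rate_gap_deriv
    (J1 J0 hx φ : ℝ → ℝ) (p : ℝ) (hp0 : 0 < p) (hp1 : p < 1) (θ : ℝ)
    (h1 : HasDerivAt J1 (φ θ * hx θ) θ)
    (h0 : HasDerivAt J0 ((1 - φ θ) * hx θ) θ) :
    HasDerivAt (fun t => J0 t / (1 - p) - J1 t / p)
      (hx θ * (p - φ θ) / (p * (1 - p))) θ := by
  have h := (h0.div_const (1 - p)).sub (h1.div_const p)
  refine h.congr_deriv ?_
  have hp : p ≠ 0 := hp0.ne'
  have hp1' : (1 : ℝ) - p ≠ 0 := by linarith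
  field_simp
  ring
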